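/- Let L be a finite modular lattice. A subset S of the cover arcs of L is diamond-closed if and only if each connected arc-component of S equals the set of cover arcs of L induced on some cover-preserving sublattice of L. Equivalently, S is diamond-closed iff S is the union of the induced cover-arc sets of a family of pairwise disjoint cover-preserving sublattices. -/

import Mathlib

def IsDiamond {α : Type*} [PartialOrder α] (a b c d : α) : Prop :=
  b ≠ c ∧ b ⋖ a ∧ c ⋖ a ∧ d ⋖ b ∧ d ⋖ c

def DiamondClosed {α : Type*} [PartialOrder α] (S : Set (α × α)) : Prop :=
  ∀ a b c d : α, IsDiamond a b c d →
    (((a, b) ∈ S ∧ (a, c) ∈ S) ∨ ((b, d) ∈ S ∧ (c, d) ∈ S)) →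
    ((a, b) ∈ S ∧ (a, c) ∈ S ∧ (b, d) ∈ S ∧ (c, d) ∈ S)

def IsPathIn {α : Type*} (S : Set (α × α)) (x y : α) (l : List α) : Prop :=
  l.head? = some x ∧ l.getLast? = some y ∧
    l.Chain' (fun u v => (u, v) ∈ S ∨ (v, u) ∈ S)

def ArcVertex {α : Type*} (S : Set (α × α)) (x : α) : Prop :=
  ∃ p ∈ S, p.1 = x ∨ p.2 = x

def ArcConnected {α : Type*} (S : Set (α × α)) : Prop :=
  ∀ x y, ArcVertex S x → ArcVertex S y → ∃ l, IsPathIn S x y l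

def IsArcComponent {α : Type*} (S T : Set (α × α)) : Prop :=
  T ⊆ S ∧ T.Nonempty ∧ ArcConnected T ∧
    ∀ T' : Set (α × α), T ⊆ T' → T' ⊆ S → ArcConnected T' → T' = T

def inducedArcs {α : Type*} [PartialOrder α] (K : Set α) : Set (α × α) :=
  {p | p.2 ⋖ p.1 ∧ p.1 ∈ K ∧ p.2 ∈ K}

def CoverPres {α : Type*} [Lattice α] (K : Sublattice α) : Prop :=
  ∀ a b : K, a ⋖ b → (a : α) ⋖ (b : α)

namespace DCProof

variable {α : Type*}

/-- one (undirected) step along an arc of `T` -/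
def Step (T : Set (α × α)) (u v : α) : Prop := (u, v) ∈ T ∨ (v, u) ∈ T

/-- walk in `T` -/
def Walk (T : Set (α × α)) : α → α → Prop := Relation.ReflTransGen (Step T)

lemma step_symm {T : Set (α × α)} {u v : α} (h : Step T u v) : Step T v u := h.symm

lemma walk_symm {T : Set (α × α)} {u v : α} (h : Walk T u v) : Walk T v u :=
  (@Relation.ReflTransGen.symmetric _ (Step T) ⟨fun _ _ h => h.symm⟩).symm _ _ h

lemma walk_mono {T T' : Set (α × α)} (hTT : T ⊆ T') {u v : α} (h : Walk T u v) :
    Walk T' u v :=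
  Relation.ReflTransGen.mono (r := Step T) (p := Step T') (fun _ _ hs => hs.imp (@hTT _) (@hTT _)) _ _ h

lemma vmem_left {T : Set (α × α)} {u v : α} (h : (u, v) ∈ T) : ArcVertex T u :=
  ⟨(u, v), h, Or.inl rfl⟩

lemma vmem_right {T : Set (α × α)} {u v : α} (h : (u, v) ∈ T) : ArcVertex T v :=
  ⟨(u, v), h, Or.inr rfl⟩

lemma walk_of_path {T : Set (α × α)} {x y : α} {l : List α} (h : IsPathIn T x y l) :
    Walk T x y := by
  induction l generalizing x with
  | nil => simp [IsPathIn] at h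
  | cons a l ih =>
    obtain ⟨h1, h2, h3⟩ := h
    simp only [List.head?_cons, Option.some.injEq] at h1
    subst h1
    cases l with
    | nil =>
      simp only [List.getLast?_singleton, Option.some.injEq] at h2
      subst h2; exact Relation.ReflTransGen.refl
    | cons b l' =>
      replace h3 := List.isChain_cons_cons.1 h3
      refine Relation.ReflTransGen.head h3.1 (ih ?_)
      exact ⟨rfl, by simpa using h2, h3.2⟩

lemma path_of_walk {T : Set (α × α)} {x y : α} (h : Walk T x y) :
    ∃ l, IsPathIn T x y l := by
  induction h using Relation.ReflTransGen.head_induction_on with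
  | refl => exact ⟨[y], rfl, rfl, List.isChain_singleton y⟩
  | @head a c h' hcb ih =>
    obtain ⟨l, h1, h2, h3⟩ := ih
    cases l with
    | nil => simp at h1
    | cons b l' =>
      simp only [List.head?_cons, Option.some.injEq] at h1
      subst h1
      exact ⟨a :: b :: l', rfl, by simpa using h2, List.isChain_cons_cons.2 ⟨h', h3⟩⟩

lemma arcConnected_iff_walk {T : Set (α × α)} :
    ArcConnected T ↔ ∀ x y, ArcVertex T x → ArcVertex T y → Walk T x y := by
  constructor
  · intro h x y hx hy
    obtain ⟨l, hl⟩ := h x y hx hy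
    exact walk_of_path hl
  · intro h x y hx hy
    exact path_of_walk (h x y hx hy)

lemma arcVertex_mono {T T' : Set (α × α)} (h : T ⊆ T') {x : α} (hx : ArcVertex T x) :
    ArcVertex T' x := by
  obtain ⟨p, hp, h2⟩ := hx; exact ⟨p, h hp, h2⟩

/-- every arc of `S` lies in some arc-component -/
lemma exists_component [Fintype α] {S : Set (α × α)} {e : α × α} (he : e ∈ S) :
    ∃ T, IsArcComponent S T ∧ e ∈ T := by
  classical
  set C : Set (Set (α × α)) := {T | e ∈ T ∧ T ⊆ S ∧ ArcConnected T} with hC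
  have hne : C.Nonempty := by
    refine ⟨{e}, rfl, by simpa using he, ?_⟩
    rw [arcConnected_iff_walk]
    intro x y hx hy
    have hv : ∀ z, ArcVertex {e} z → z = e.1 ∨ z = e.2 := by
      rintro z ⟨p, hp, hz⟩
      simp only [Set.mem_singleton_iff] at hp
      subst hp
      exact hz.imp (fun h => h.symm) (fun h => h.symm)
    have hstep : Walk {e} e.1 e.2 :=
      Relation.ReflTransGen.single (Or.inl (by simp))
    rcases hv x hx with rfl | rfl <;> rcases hv y hy with rfl | rfl
    · exact Relation.ReflTransGen.refl
    · exact hstep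
    · exact walk_symm hstep
    · exact Relation.ReflTransGen.refl
  obtain ⟨T, hTC, hmax⟩ := Set.Finite.exists_maximalFor id C C.toFinite hne
  obtain ⟨heT, hTS, hconn⟩ := hTC
  refine ⟨T, ⟨hTS, ⟨e, heT⟩, hconn, ?_⟩, heT⟩
  intro T' h1 h2 h3
  exact (Set.Subset.antisymm h1 (hmax ⟨h1 heT, h2, h3⟩ h1))
    |>.symm

/-- an arc of `S` sharing a vertex with a component belongs to it -/
lemma absorb {S T : Set (α × α)} (hT : IsArcComponent S T) {e : α × α} (he : e ∈ S)
    (hv : ArcVertex T e.1 ∨ ArcVertex T e.2) : e ∈ T := by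
  obtain ⟨hTS, hne, hconn, hmax⟩ := hT
  rw [arcConnected_iff_walk] at hconn
  -- pick the shared vertex
  obtain ⟨v, hvT, hve⟩ : ∃ v, ArcVertex T v ∧ (v = e.1 ∨ v = e.2) := by
    rcases hv with h | h
    · exact ⟨e.1, h, Or.inl rfl⟩
    · exact ⟨e.2, h, Or.inr rfl⟩
  set T' := insert e T with hT'
  have hsub : T ⊆ T' := Set.subset_insert _ _
  have hstep : Walk T' e.1 e.2 := Relation.ReflTransGen.single (Or.inl (by simp [hT']))
  have hwv : ∀ z, ArcVertex T' z → Walk T' z v := by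
    rintro z ⟨p, hp, hz⟩
    rcases Set.mem_insert_iff.1 hp with hpe | hpT
    · rw [hpe] at hz
      have hv2 : Walk T' e.1 v ∧ Walk T' e.2 v := by
        rcases hve with rfl | rfl
        · exact ⟨Relation.ReflTransGen.refl, walk_symm hstep⟩
        · exact ⟨hstep, Relation.ReflTransGen.refl⟩
      rcases hz with rfl | rfl
      · exact hv2.1
      · exact hv2.2
    · have hzT : ArcVertex T z := by
        rcases hz with rfl | rfl
        · exact vmem_left hpT
        · exact vmem_right hpT
      exact walk_mono hsub (hconn z v hzT hvT)
  have hconn' : ArcConnected T' := by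
    rw [arcConnected_iff_walk]
    intro x y hx hy
    exact (hwv x hx).trans (walk_symm (hwv y hy))
  have := hmax T' hsub (by
    intro p hp
    rcases Set.mem_insert_iff.1 hp with rfl | h
    · exact he
    · exact hTS h) hconn'
  rw [← this]
  exact Set.mem_insert _ _

/-- two components sharing a vertex are equal -/
lemma component_eq_of_shared {S T T' : Set (α × α)} (hT : IsArcComponent S T)
    (hT' : IsArcComponent S T') {x : α} (hx : ArcVertex T x) (hx' : ArcVertex T' x) :
    T = T' := by
  obtain ⟨hTS, _, hconn, hmax⟩ := hT
  obtain ⟨hTS', _, hconn', hmax'⟩ := hT'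
  rw [arcConnected_iff_walk] at hconn hconn'
  set U := T ∪ T' with hU
  have hwx : ∀ z, ArcVertex U z → Walk U z x := by
    rintro z ⟨p, hp, hz⟩
    rcases hp with hpT | hpT
    · have : ArcVertex T z := by
        rcases hz with rfl | rfl
        · exact vmem_left hpT
        · exact vmem_right hpT
      exact walk_mono Set.subset_union_left (hconn z x this hx)
    · have : ArcVertex T' z := by
        rcases hz with rfl | rfl
        · exact vmem_left hpT
        · exact vmem_right hpT
      exact walk_mono Set.subset_union_right (hconn' z x this hx')
  have hconnU : ArcConnected U := by
    rw [arcConnected_iff_walk]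
    intro a b ha hb
    exact (hwx a ha).trans (walk_symm (hwx b hb))
  have h1 := hmax U Set.subset_union_left (Set.union_subset hTS hTS') hconnU
  have h2 := hmax' U Set.subset_union_right (Set.union_subset hTS hTS') hconnU
  rw [← h1, ← h2]


variable {α : Type*}

section OrderFacts
variable [Lattice α]

lemma diamond_sup {a b c : α} (hbc : b ≠ c) (hb : b ⋖ a) (hc : c ⋖ a) : b ⊔ c = a := by
  have hcb : ¬c ≤ b := by
    intro h
    exact hc.2 (h.lt_of_ne hbc.symm) hb.lt
  have h1 : b < b ⊔ c := left_lt_sup.2 hcb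
  have h2 : b ⊔ c ≤ a := sup_le hb.le hc.le
  rcases h2.lt_or_eq with h | h
  · exact absurd h (hb.2 h1)
  · exact h

lemma diamond_inf {b c d : α} (hbc : b ≠ c) (hb : d ⋖ b) (hc : d ⋖ c) : b ⊓ c = d := by
  have hcb : ¬b ≤ c := by
    intro h
    exact hc.2 hb.lt (h.lt_of_ne hbc)
  have h1 : b ⊓ c < b := inf_lt_left.2 hcb
  have h2 : d ≤ b ⊓ c := le_inf hb.le hc.le
  rcases h2.lt_or_eq with h | h
  · exact absurd h1 (hb.2 h)
  · exact h.symm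

variable [IsModularLattice α]

lemma square_up {a b c : α} (hbc : b ≠ c) (hb : b ⋖ a) (hc : c ⋖ a) :
    b ⊓ c ⋖ b ∧ b ⊓ c ⋖ c := by
  have hs := diamond_sup hbc hb hc
  exact ⟨inf_covBy_of_covBy_sup_right (by rw [hs]; exact hc),
    inf_covBy_of_covBy_sup_left (by rw [hs]; exact hb)⟩

lemma square_down {b c d : α} (hbc : b ≠ c) (hb : d ⋖ b) (hc : d ⋖ c) :
    b ⋖ b ⊔ c ∧ c ⋖ b ⊔ c := by
  have hs := diamond_inf hbc hb hc
  exact ⟨covBy_sup_of_inf_covBy_right (by rw [hs]; exact hc),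
    covBy_sup_of_inf_covBy_left (by rw [hs]; exact hb)⟩

end OrderFacts

/-- descending chain of arcs -/
abbrev Down (T : Set (α × α)) : α → α → Prop :=
  Relation.ReflTransGen (fun u v : α => (u, v) ∈ T)

/-- ascending chain of arcs -/
abbrev Up (T : Set (α × α)) : α → α → Prop :=
  Relation.ReflTransGen (fun u v : α => (v, u) ∈ T)

section Chains
variable [Lattice α] {T : Set (α × α)}

lemma down_le (hTc : ∀ p ∈ T, p.2 ⋖ p.1) {x y : α} (h : Down T x y) : y ≤ x := by
  induction h with
  | refl => exact le_rfl
  | tail _ hstep ih => exact ((hTc _ hstep).le).trans ih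

lemma up_le (hTc : ∀ p ∈ T, p.2 ⋖ p.1) {x y : α} (h : Up T x y) : x ≤ y := by
  induction h with
  | refl => exact le_rfl
  | tail _ hstep ih => exact ih.trans (hTc _ hstep).le

lemma PD
    (rule1 : ∀ a b c : α, (a, b) ∈ T → (a, c) ∈ T → b ≠ c →
      (b, b ⊓ c) ∈ T ∧ (c, b ⊓ c) ∈ T)
    {c m : α} (hd : Down T c m) :
    ∀ b, (c, b) ∈ T → ∃ m', Down T b m' ∧ Up T m' m := by
  induction hd using Relation.ReflTransGen.head_induction_on with
  | refl =>
    exact fun b hb => ⟨b, Relation.ReflTransGen.refl, Relation.ReflTransGen.single hb⟩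
  | @head a c₁ h' hd' ih =>
    intro b hb
    by_cases hbc : b = c₁
    · subst hbc; exact ⟨m, hd', Relation.ReflTransGen.refl⟩
    · obtain ⟨h1, h2⟩ := rule1 a b c₁ hb h' hbc
      obtain ⟨m'', hdm, hum⟩ := ih (b ⊓ c₁) h2
      exact ⟨m'', Relation.ReflTransGen.head h1 hdm, hum⟩

lemma PU
    (rule2 : ∀ b c d : α, (b, d) ∈ T → (c, d) ∈ T → b ≠ c →
      (b ⊔ c, b) ∈ T ∧ (b ⊔ c, c) ∈ T)
    {c m : α} (hu : Up T c m) :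
    ∀ b, (b, c) ∈ T → ∃ m', Up T b m' ∧ Down T m' m := by
  induction hu using Relation.ReflTransGen.head_induction_on with
  | refl =>
    exact fun b hb => ⟨b, Relation.ReflTransGen.refl, Relation.ReflTransGen.single hb⟩
  | @head a c₁ h' hu' ih =>
    intro b hb
    by_cases hbc : b = c₁
    · subst hbc; exact ⟨m, hu', Relation.ReflTransGen.refl⟩
    · obtain ⟨h1, h2⟩ := rule2 b c₁ a hb h' hbc
      obtain ⟨m'', hum, hdm⟩ := ih (b ⊔ c₁) h2
      exact ⟨m'', Relation.ReflTransGen.head h1 hum, hdm⟩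

end Chains
section Chains2
variable [Lattice α] {T : Set (α × α)}

/-- undirected step, same as in the problem statement -/
abbrev Stp (T : Set (α × α)) (u v : α) : Prop := (u, v) ∈ T ∨ (v, u) ∈ T

lemma valley
    (rule1 : ∀ a b c : α, (a, b) ∈ T → (a, c) ∈ T → b ≠ c →
      (b, b ⊓ c) ∈ T ∧ (c, b ⊓ c) ∈ T)
    {x y : α} (hw : Relation.ReflTransGen (Stp T) x y) :
    ∃ m, Down T x m ∧ Up T m y := by
  induction hw using Relation.ReflTransGen.head_induction_on with
  | refl => exact ⟨y, Relation.ReflTransGen.refl, Relation.ReflTransGen.refl⟩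
  | @head a c h' hw' ih =>
    obtain ⟨m, hd, hu⟩ := ih
    rcases h' with h | h
    · exact ⟨m, Relation.ReflTransGen.head h hd, hu⟩
    · obtain ⟨m', hd', hu'⟩ := PD rule1 hd a h
      exact ⟨m', hd', hu'.trans hu⟩

lemma peak
    (rule2 : ∀ b c d : α, (b, d) ∈ T → (c, d) ∈ T → b ≠ c →
      (b ⊔ c, b) ∈ T ∧ (b ⊔ c, c) ∈ T)
    {x y : α} (hw : Relation.ReflTransGen (Stp T) x y) :
    ∃ m, Up T x m ∧ Down T m y := by
  induction hw using Relation.ReflTransGen.head_induction_on with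
  | refl => exact ⟨y, Relation.ReflTransGen.refl, Relation.ReflTransGen.refl⟩
  | @head a c h' hw' ih =>
    obtain ⟨m, hu, hd⟩ := ih
    rcases h' with h | h
    · obtain ⟨m', hu', hd'⟩ := PU rule2 hu a h
      exact ⟨m', hu', hd'.trans hd⟩
    · exact ⟨m, Relation.ReflTransGen.head h hu, hd⟩

lemma joinAscend (hTc : ∀ p ∈ T, p.2 ⋖ p.1)
    (rule2 : ∀ b c d : α, (b, d) ∈ T → (c, d) ∈ T → b ≠ c →
      (b ⊔ c, b) ∈ T ∧ (b ⊔ c, c) ∈ T)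
    {b y : α} (hu : Up T b y) : ∀ a, (a, b) ∈ T →
    Up T a (a ⊔ y) ∧ (a ⊔ y = y ∨ (a ⊔ y, y) ∈ T) := by
  induction hu with
  | refl =>
    intro a ha
    have hba : b ≤ a := (hTc _ ha).le
    rw [sup_eq_left.mpr hba]
    exact ⟨Relation.ReflTransGen.refl, Or.inr ha⟩
  | @tail w w' hu' hstep ih =>
    intro a ha
    obtain ⟨ih1, ih2⟩ := ih a ha
    have hww' : w ≤ w' := (hTc _ hstep).le
    rcases ih2 with heq | hedge
    · have haw : a ≤ w := heq ▸ le_sup_left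
      rw [sup_eq_right.mpr (haw.trans hww')]
      exact ⟨Relation.ReflTransGen.tail (heq ▸ ih1) hstep, Or.inl rfl⟩
    · by_cases h2 : a ⊔ w = w'
      · have h3 : a ⊔ w' = w' := by
          rw [← h2, ← sup_assoc, sup_idem]
        rw [h3]
        exact ⟨h2 ▸ ih1, Or.inl rfl⟩
      · obtain ⟨e1, e2⟩ := rule2 (a ⊔ w) w' w hedge hstep h2
        have hsw : (a ⊔ w) ⊔ w' = a ⊔ w' := by
          rw [sup_assoc, sup_eq_right.mpr hww']
        rw [hsw] at e1 e2
        exact ⟨Relation.ReflTransGen.tail ih1 e1, Or.inr e2⟩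

lemma meetDescend (hTc : ∀ p ∈ T, p.2 ⋖ p.1)
    (rule1 : ∀ a b c : α, (a, b) ∈ T → (a, c) ∈ T → b ≠ c →
      (b, b ⊓ c) ∈ T ∧ (c, b ⊓ c) ∈ T)
    {b y : α} (hd : Down T b y) : ∀ a, (b, a) ∈ T →
    Down T a (a ⊓ y) ∧ (a ⊓ y = y ∨ (y, a ⊓ y) ∈ T) := by
  induction hd with
  | refl =>
    intro a ha
    have hab : a ≤ b := (hTc _ ha).le
    rw [inf_eq_left.mpr hab]
    exact ⟨Relation.ReflTransGen.refl, Or.inr ha⟩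
  | @tail w w' hd' hstep ih =>
    intro a ha
    obtain ⟨ih1, ih2⟩ := ih a ha
    have hww' : w' ≤ w := (hTc _ hstep).le
    rcases ih2 with heq | hedge
    · have haw : w ≤ a := heq ▸ inf_le_left
      rw [inf_eq_right.mpr (hww'.trans haw)]
      exact ⟨Relation.ReflTransGen.tail (heq ▸ ih1) hstep, Or.inl rfl⟩
    · by_cases h2 : a ⊓ w = w'
      · have h3 : a ⊓ w' = w' := by
          rw [← h2, ← inf_assoc, inf_idem]
        rw [h3]
        exact ⟨h2 ▸ ih1, Or.inl rfl⟩
      · obtain ⟨e1, e2⟩ := rule1 w (a ⊓ w) w' hedge hstep h2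
        have hsw : (a ⊓ w) ⊓ w' = a ⊓ w' := by
          rw [inf_assoc, inf_eq_right.mpr hww']
        rw [hsw] at e1 e2
        exact ⟨Relation.ReflTransGen.tail ih1 e1, Or.inr e2⟩

end Chains2
section Chains3
variable [Lattice α] {T : Set (α × α)}

lemma up_join (hTc : ∀ p ∈ T, p.2 ⋖ p.1)
    (rule1 : ∀ a b c : α, (a, b) ∈ T → (a, c) ∈ T → b ≠ c →
      (b, b ⊓ c) ∈ T ∧ (c, b ⊓ c) ∈ T)
    (rule2 : ∀ b c d : α, (b, d) ∈ T → (c, d) ∈ T → b ≠ c →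
      (b ⊔ c, b) ∈ T ∧ (b ⊔ c, c) ∈ T)
    {x y : α} (hw : Relation.ReflTransGen (Stp T) x y) : Up T x (x ⊔ y) := by
  obtain ⟨m, hd, hu⟩ := valley rule1 hw
  clear hw
  induction hd using Relation.ReflTransGen.head_induction_on with
  | refl =>
    rw [sup_eq_right.mpr (up_le hTc hu)]
    exact hu
  | @head a c h' hd' ih =>
    have h1 := (joinAscend hTc rule2 ih a h').1
    rwa [← sup_assoc, sup_eq_left.mpr (hTc _ h').le] at h1

lemma down_meet (hTc : ∀ p ∈ T, p.2 ⋖ p.1)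
    (rule1 : ∀ a b c : α, (a, b) ∈ T → (a, c) ∈ T → b ≠ c →
      (b, b ⊓ c) ∈ T ∧ (c, b ⊓ c) ∈ T)
    (rule2 : ∀ b c d : α, (b, d) ∈ T → (c, d) ∈ T → b ≠ c →
      (b ⊔ c, b) ∈ T ∧ (b ⊔ c, c) ∈ T)
    {x y : α} (hw : Relation.ReflTransGen (Stp T) x y) : Down T x (x ⊓ y) := by
  obtain ⟨m, hu, hd⟩ := peak rule2 hw
  clear hw
  induction hu using Relation.ReflTransGen.head_induction_on with
  | refl =>
    rw [inf_eq_right.mpr (down_le hTc hd)]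
    exact hd
  | @head a c h' hu' ih =>
    have h1 := (meetDescend hTc rule1 ih a h').1
    rwa [← inf_assoc, inf_eq_left.mpr (hTc _ h').le] at h1

lemma vertex_of_up {x z : α} (hx : ArcVertex T x) (h : Up T x z) : ArcVertex T z := by
  rcases Relation.ReflTransGen.cases_tail h with heq | ⟨c, _, hc⟩
  · rwa [heq]
  · exact ⟨(z, c), hc, Or.inl rfl⟩

lemma vertex_of_down {x z : α} (hx : ArcVertex T x) (h : Down T x z) : ArcVertex T z := by
  rcases Relation.ReflTransGen.cases_tail h with heq | ⟨c, _, hc⟩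
  · rwa [heq]
  · exact ⟨(c, z), hc, Or.inr rfl⟩

lemma cover_edge (hTc : ∀ p ∈ T, p.2 ⋖ p.1)
    (rule1 : ∀ a b c : α, (a, b) ∈ T → (a, c) ∈ T → b ≠ c →
      (b, b ⊓ c) ∈ T ∧ (c, b ⊓ c) ∈ T)
    (rule2 : ∀ b c d : α, (b, d) ∈ T → (c, d) ∈ T → b ≠ c →
      (b ⊔ c, b) ∈ T ∧ (b ⊔ c, c) ∈ T)
    {x y : α} (hw : Relation.ReflTransGen (Stp T) x y) (hxy : y ⋖ x) : (x, y) ∈ T := by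
  have hd := down_meet hTc rule1 rule2 hw
  rw [inf_eq_right.mpr hxy.le] at hd
  rcases Relation.ReflTransGen.cases_head hd with heq | ⟨c, hxc, hcy⟩
  · exact absurd heq hxy.lt.ne'
  · have hyc : y ≤ c := down_le hTc hcy
    rcases hyc.lt_or_eq with hlt | heq
    · exact absurd (hTc _ hxc).lt (hxy.2 hlt)
    · rw [← heq] at hxc
      exact hxc
end Chains3


section Main
variable [Lattice α] [IsModularLattice α] {S T : Set (α × α)}

lemma comp_rules (hSc : ∀ p ∈ S, p.2 ⋖ p.1) (hDC : DiamondClosed S)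
    (hT : IsArcComponent S T) :
    (∀ p ∈ T, p.2 ⋖ p.1) ∧
    (∀ a b c : α, (a, b) ∈ T → (a, c) ∈ T → b ≠ c →
      (b, b ⊓ c) ∈ T ∧ (c, b ⊓ c) ∈ T) ∧
    (∀ b c d : α, (b, d) ∈ T → (c, d) ∈ T → b ≠ c →
      (b ⊔ c, b) ∈ T ∧ (b ⊔ c, c) ∈ T) := by
  have hTS := hT.1
  have hTc : ∀ p ∈ T, p.2 ⋖ p.1 := fun p hp => hSc p (hTS hp)
  refine ⟨hTc, ?_, ?_⟩
  · intro a b c hab hac hbc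
    have hb : b ⋖ a := hTc _ hab
    have hc : c ⋖ a := hTc _ hac
    obtain ⟨h1, h2⟩ := square_up hbc hb hc
    obtain ⟨_, _, h3, h4⟩ := hDC a b c (b ⊓ c) ⟨hbc, hb, hc, h1, h2⟩
      (Or.inl ⟨hTS hab, hTS hac⟩)
    exact ⟨absorb hT h3 (Or.inl (vmem_right hab)),
      absorb hT h4 (Or.inl (vmem_right hac))⟩
  · intro b c d hbd hcd hbc
    have hb : d ⋖ b := hTc _ hbd
    have hc : d ⋖ c := hTc _ hcd
    obtain ⟨h1, h2⟩ := square_down hbc hb hc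
    obtain ⟨h3, h4, _, _⟩ := hDC (b ⊔ c) b c d ⟨hbc, h1, h2, hb, hc⟩
      (Or.inr ⟨hTS hbd, hTS hcd⟩)
    exact ⟨absorb hT h3 (Or.inr (vmem_left hbd)),
      absorb hT h4 (Or.inr (vmem_left hcd))⟩

lemma component_sublattice (hSc : ∀ p ∈ S, p.2 ⋖ p.1) (hDC : DiamondClosed S)
    (hT : IsArcComponent S T) :
    ∃ K : Sublattice α, (K : Set α) = {x | ArcVertex T x} ∧ CoverPres K ∧
      T = inducedArcs (K : Set α) := by
  obtain ⟨hTc, rule1, rule2⟩ := comp_rules hSc hDC hT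
  have hconn : ∀ x y, ArcVertex T x → ArcVertex T y →
      Relation.ReflTransGen (Stp T) x y := by
    intro x y hx hy
    exact (arcConnected_iff_walk.1 hT.2.2.1) x y hx hy
  set KS : Set α := {x | ArcVertex T x} with hKS
  have hsup : SupClosed KS := fun x hx y hy =>
    vertex_of_up hx (up_join hTc rule1 rule2 (hconn x y hx hy))
  have hinf : InfClosed KS := fun x hx y hy =>
    vertex_of_down hx (down_meet hTc rule1 rule2 (hconn x y hx hy))
  refine ⟨⟨KS, hsup, hinf⟩, rfl, ?_, ?_⟩
  · intro a b hab
    have hlt : (a : α) < (b : α) := hab.lt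
    have hd : Down T (b : α) ((b : α) ⊓ (a : α)) :=
      down_meet hTc rule1 rule2 (hconn _ _ b.2 a.2)
    rw [inf_eq_right.mpr hlt.le] at hd
    rcases Relation.ReflTransGen.cases_head hd with heq | ⟨c, hbc, hca⟩
    · exact absurd heq hlt.ne'
    · have hcb : c ⋖ (b : α) := hTc _ hbc
      have hac : (a : α) ≤ c := down_le hTc hca
      rcases hac.lt_or_eq with h | h
      · exfalso
        have hcK : c ∈ KS := vmem_right hbc
        exact hab.2 (show a < ⟨c, hcK⟩ from h) (show (⟨c, hcK⟩ : _) < b from hcb.lt)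
      · rw [← h] at hbc
        exact hTc _ hbc
  · ext p
    constructor
    · intro hp
      exact ⟨hTc _ hp, ⟨p, hp, Or.inl rfl⟩, ⟨p, hp, Or.inr rfl⟩⟩
    · rintro ⟨hcov, hp1, hp2⟩
      have := cover_edge hTc rule1 rule2 (hconn p.1 p.2 hp1 hp2) hcov
      rwa [Prod.mk.eta] at this

end Main

section Final
variable [Lattice α] [Fintype α] [IsModularLattice α] {S : Set (α × α)}

lemma P1_to_DC (hSc : ∀ p ∈ S, p.2 ⋖ p.1)
    (h : ∀ T : Set (α × α), IsArcComponent S T →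
      ∃ K : Sublattice α, CoverPres K ∧ T = inducedArcs (K : Set α)) :
    DiamondClosed S := by
  rintro a b c d ⟨hbc, hb, hc, hdb, hdc⟩ (⟨h1, h2⟩ | ⟨h1, h2⟩)
  · obtain ⟨T, hT, hmem⟩ := exists_component h1
    have hmem2 : (a, c) ∈ T := absorb hT h2 (Or.inl (vmem_left hmem))
    obtain ⟨K, _, hKT⟩ := h T hT
    rw [hKT] at hmem hmem2
    have hdK : d ∈ (K : Set α) := by
      rw [← diamond_inf hbc hdb hdc]
      exact K.infClosed hmem.2.2 hmem2.2.2
    refine ⟨h1, h2, hT.1 ?_, hT.1 ?_⟩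
    · rw [hKT]; exact ⟨hdb, hmem.2.2, hdK⟩
    · rw [hKT]; exact ⟨hdc, hmem2.2.2, hdK⟩
  · obtain ⟨T, hT, hmem⟩ := exists_component h1
    have hmem2 : (c, d) ∈ T := absorb hT h2 (Or.inr (vmem_right hmem))
    obtain ⟨K, _, hKT⟩ := h T hT
    rw [hKT] at hmem hmem2
    have haK : a ∈ (K : Set α) := by
      rw [← diamond_sup hbc hb hc]
      exact K.supClosed hmem.2.1 hmem2.2.1
    refine ⟨hT.1 ?_, hT.1 ?_, h1, h2⟩
    · rw [hKT]; exact ⟨hb, haK, hmem.2.1⟩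
    · rw [hKT]; exact ⟨hc, haK, hmem2.2.1⟩

lemma P2_to_DC (hSc : ∀ p ∈ S, p.2 ⋖ p.1)
    (h : ∃ 𝒦 : Set (Sublattice α), (∀ K ∈ 𝒦, CoverPres K) ∧
      (𝒦.Pairwise fun K K' => Disjoint (K : Set α) (K' : Set α)) ∧
      S = ⋃ K ∈ 𝒦, inducedArcs (K : Set α)) :
    DiamondClosed S := by
  obtain ⟨𝒦, -, hdisj, hU⟩ := h
  rintro a b c d ⟨hbc, hb, hc, hdb, hdc⟩ (⟨h1, h2⟩ | ⟨h1, h2⟩)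
  · rw [hU] at h1 h2
    simp only [Set.mem_iUnion] at h1 h2
    obtain ⟨K1, hK1, hm1⟩ := h1
    obtain ⟨K2, hK2, hm2⟩ := h2
    have hKeq : K1 = K2 := by
      by_contra hne
      exact Set.disjoint_left.1 (hdisj hK1 hK2 hne) hm1.2.1 hm2.2.1
    subst hKeq
    have hdK : d ∈ (K1 : Set α) := by
      rw [← diamond_inf hbc hdb hdc]
      exact K1.infClosed hm1.2.2 hm2.2.2
    refine ⟨by rw [hU]; simp only [Set.mem_iUnion]; exact ⟨K1, hK1, hm1⟩,
      by rw [hU]; simp only [Set.mem_iUnion]; exact ⟨K1, hK1, hm2⟩, ?_, ?_⟩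
    · rw [hU]; simp only [Set.mem_iUnion]
      exact ⟨K1, hK1, hdb, hm1.2.2, hdK⟩
    · rw [hU]; simp only [Set.mem_iUnion]
      exact ⟨K1, hK1, hdc, hm2.2.2, hdK⟩
  · rw [hU] at h1 h2
    simp only [Set.mem_iUnion] at h1 h2
    obtain ⟨K1, hK1, hm1⟩ := h1
    obtain ⟨K2, hK2, hm2⟩ := h2
    have hKeq : K1 = K2 := by
      by_contra hne
      exact Set.disjoint_left.1 (hdisj hK1 hK2 hne) hm1.2.2 hm2.2.2
    subst hKeq
    have haK : a ∈ (K1 : Set α) := by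
      rw [← diamond_sup hbc hb hc]
      exact K1.supClosed hm1.2.1 hm2.2.1
    refine ⟨?_, ?_,
      by rw [hU]; simp only [Set.mem_iUnion]; exact ⟨K1, hK1, hm1⟩,
      by rw [hU]; simp only [Set.mem_iUnion]; exact ⟨K1, hK1, hm2⟩⟩
    · rw [hU]; simp only [Set.mem_iUnion]
      exact ⟨K1, hK1, hb, haK, hm1.2.1⟩
    · rw [hU]; simp only [Set.mem_iUnion]
      exact ⟨K1, hK1, hc, haK, hm2.2.1⟩

lemma DC_to_P2 (hSc : ∀ p ∈ S, p.2 ⋖ p.1) (hDC : DiamondClosed S) :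
    ∃ 𝒦 : Set (Sublattice α), (∀ K ∈ 𝒦, CoverPres K) ∧
      (𝒦.Pairwise fun K K' => Disjoint (K : Set α) (K' : Set α)) ∧
      S = ⋃ K ∈ 𝒦, inducedArcs (K : Set α) := by
  refine ⟨{K | ∃ T, IsArcComponent S T ∧ (K : Set α) = {x | ArcVertex T x} ∧
      CoverPres K ∧ T = inducedArcs (K : Set α)}, ?_, ?_, ?_⟩
  · rintro K ⟨T, _, _, hcp, _⟩
    exact hcp
  · rintro K ⟨T, hT, hKv, -, -⟩ K' ⟨T', hT', hKv', -, -⟩ hne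
    rw [Set.disjoint_left]
    intro x hx hx'
    rw [hKv] at hx
    rw [hKv'] at hx'
    have hTT : T = T' := component_eq_of_shared hT hT' hx hx'
    exact hne (SetLike.coe_injective (by rw [hKv, hKv', hTT]))
  · ext p
    simp only [Set.mem_iUnion]
    constructor
    · intro hp
      obtain ⟨T, hT, hmem⟩ := exists_component hp
      obtain ⟨K, hKv, hcp, hKT⟩ := component_sublattice hSc hDC hT
      refine ⟨K, ⟨T, hT, hKv, hcp, hKT⟩, ?_⟩
      rw [← hKT]
      exact hmem
    · rintro ⟨K, ⟨T, hT, -, -, hKT⟩, hp⟩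
      rw [← hKT] at hp
      exact hT.1 hp

end Final
end DCProof

theorem diamondClosed_iff_CS_packing
    {α : Type*} [Lattice α] [Fintype α] [IsModularLattice α]
    (S : Set (α × α)) (hSc : ∀ p ∈ S, p.2 ⋖ p.1) :
    (DiamondClosed S ↔
      ∀ T : Set (α × α), IsArcComponent S T →
        ∃ K : Sublattice α, CoverPres K ∧ T = inducedArcs (K : Set α)) ∧
    (DiamondClosed S ↔
      ∃ 𝒦 : Set (Sublattice α), (∀ K ∈ 𝒦, CoverPres K) ∧
        (𝒦.Pairwise fun K K' => Disjoint (K : Set α) (K' : Set α)) ∧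
        S = ⋃ K ∈ 𝒦, inducedArcs (K : Set α)) := by
  constructor
  · constructor
    · intro hDC T hT
      obtain ⟨K, _, h2, h3⟩ := DCProof.component_sublattice hSc hDC hT
      exact ⟨K, h2, h3⟩
    · exact DCProof.P1_to_DC hSc
  · constructor
    · exact DCProof.DC_to_P2 hSc
    · exact DCProof.P2_to_DC hSc
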